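/- For a variety V of finite type and the class C of n-generated (or finitely generated) algebras in V: C satisfies the ascending chain condition on congruence lattices if and only if every algebra in C has a finite presentation. -/

import Mathlib

/-- An algebraic signature: a family of function symbols with arities. -/
structure Signature where
  I : Type
  arity : I → ℕ

/-- An algebra over a signature. -/
structure Alg (σ : Signature) where
  carrier : Type
  op : ∀ i : σ.I, (Fin (σ.arity i) → carrier) → carrier

/-- A congruence relation: an equivalence relation compatible with all operations. -/
def IsCongruence {σ : Signature} (A : Alg σ) (r : A.carrier → A.carrier → Prop) : Prop :=
  Equivalence r ∧ ∀ (i : σ.I) (x y : Fin (σ.arity i) → A.carrier),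
    (∀ j, r (x j) (y j)) → r (A.op i x) (A.op i y)

/-- The quotient algebra of `A` by a relation `r` (intended: a congruence). -/
noncomputable def quotAlg {σ : Signature} (A : Alg σ) (r : A.carrier → A.carrier → Prop) :
    Alg σ where
  carrier := Quot r
  op := fun i x => Quot.mk r (A.op i fun j => (x j).out)

/-- `f` is a homomorphism from `A` to `B`. -/
def IsHom {σ : Signature} (A B : Alg σ) (f : A.carrier → B.carrier) : Prop :=
  ∀ (i : σ.I) (x : Fin (σ.arity i) → A.carrier), f (A.op i x) = B.op i fun j => f (x j)

/-- `B` is a homomorphic image of `A`. -/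
def HomImage {σ : Signature} (A B : Alg σ) : Prop :=
  ∃ f : A.carrier → B.carrier, IsHom A B f ∧ Function.Surjective f

/-- `A` and `B` are isomorphic algebras. -/
def AlgIso {σ : Signature} (A B : Alg σ) : Prop :=
  ∃ f : A.carrier ≃ B.carrier, IsHom A B f
/-- Terms over a signature with variables from `X`. -/
inductive Term (σ : Signature) (X : Type) : Type where
  | var : X → Term σ X
  | app : (i : σ.I) → (Fin (σ.arity i) → Term σ X) → Term σ X

/-- The term algebra over `X`. -/
def termAlg (σ : Signature) (X : Type) : Alg σ := ⟨Term σ X, Term.app⟩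

/-- Substitution of terms for variables (and its extension to all terms). -/
def Term.subst {σ : Signature} {X Y : Type} (f : X → Term σ Y) : Term σ X → Term σ Y
  | .var x => f x
  | .app i t => .app i fun j => (t j).subst f

/-- The congruence generated by a relation `R` on an algebra: the intersection of all
congruences containing `R`. -/
def congGen {σ : Signature} (A : Alg σ) (R : A.carrier → A.carrier → Prop) :
    A.carrier → A.carrier → Prop :=
  fun a b => ∀ r, IsCongruence A r → (∀ x y, R x y → r x y) → r a b

/-- The congruence on the term algebra over `X` generated by the equations `R` together
with all substitution instances of the equational laws `Λ` of the variety. -/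
def presCong (σ : Signature) (Λ : Set (Term σ ℕ × Term σ ℕ)) (X : Type)
    (R : Set (Term σ X × Term σ X)) : Term σ X → Term σ X → Prop :=
  congGen (termAlg σ X) fun s t =>
    (s, t) ∈ R ∨ ∃ l ∈ Λ, ∃ f : ℕ → Term σ X, s = l.1.subst f ∧ t = l.2.subst f

/-- The algebra presented by ⟨X | R⟩ in the variety with laws `Λ`. -/
noncomputable def presAlg (σ : Signature) (Λ : Set (Term σ ℕ × Term σ ℕ)) (X : Type)
    (R : Set (Term σ X × Term σ X)) : Alg σ :=
  quotAlg (termAlg σ X) (presCong σ Λ X R)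

/-- A congruence is proper if it identifies two distinct elements. -/
def IsProperCong {σ : Signature} (A : Alg σ) (r : A.carrier → A.carrier → Prop) : Prop :=
  ∃ a b, r a b ∧ a ≠ b

/-- The ascending chain condition on the congruence lattice of an algebra:
every ascending chain of congruences stabilizes. -/
def HasACCcong {σ : Signature} (A : Alg σ) : Prop :=
  ∀ c : ℕ → (A.carrier → A.carrier → Prop),
    (∀ k, IsCongruence A (c k)) → (∀ k a b, c k a b → c (k + 1) a b) →
    ∃ N, ∀ m, N ≤ m → c m = c N

/-- An algebra is Hopfian if it is not isomorphic to any of its proper quotients. -/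
def Hopfian {σ : Signature} (A : Alg σ) : Prop :=
  ∀ r, IsCongruence A r → IsProperCong A r → ¬ AlgIso A (quotAlg A r)


section Stmt10Aux

variable {σ : Signature}

theorem mk_eq_iff' {α : Type} {r : α → α → Prop} (hr : Equivalence r) {a b : α} :
    Quot.mk r a = Quot.mk r b ↔ r a b := by
  rw [Quot.eq]; exact hr.eqvGen_iff

theorem out_rel' {α : Type} {r : α → α → Prop} (hr : Equivalence r) (a : α) :
    r ((Quot.mk r a).out) a :=
  (mk_eq_iff' hr).mp (Quot.out_eq _)

theorem congGen_isCong (A : Alg σ) (R : A.carrier → A.carrier → Prop) :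
    IsCongruence A (congGen A R) := by
  constructor
  · constructor
    · intro a r hr _; exact hr.1.refl a
    · intro a b h r hr hR; exact hr.1.symm (h r hr hR)
    · intro a b c h1 h2 r hr hR; exact hr.1.trans (h1 r hr hR) (h2 r hr hR)
  · intro i x y h r hr hR
    exact hr.2 i x y fun j => h j r hr hR

theorem presCong_isCong (Λ : Set (Term σ ℕ × Term σ ℕ)) (X : Type)
    (R : Set (Term σ X × Term σ X)) :
    IsCongruence (termAlg σ X) (presCong σ Λ X R) :=
  congGen_isCong _ _

theorem presCong_of_mem {Λ : Set (Term σ ℕ × Term σ ℕ)} {X : Type}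
    {R : Set (Term σ X × Term σ X)} {p : Term σ X × Term σ X} (h : p ∈ R) :
    presCong σ Λ X R p.1 p.2 :=
  fun _ _ hR => hR _ _ (Or.inl h)

theorem presCong_of_law {Λ : Set (Term σ ℕ × Term σ ℕ)} {X : Type}
    {R : Set (Term σ X × Term σ X)} {l} (hl : l ∈ Λ) (f : ℕ → Term σ X) :
    presCong σ Λ X R (l.1.subst f) (l.2.subst f) :=
  fun _ _ hR => hR _ _ (Or.inr ⟨l, hl, f, rfl, rfl⟩)

theorem presCong_le {Λ : Set (Term σ ℕ × Term σ ℕ)} {X : Type}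
    {R : Set (Term σ X × Term σ X)} {r : Term σ X → Term σ X → Prop}
    (hr : IsCongruence (termAlg σ X) r)
    (hR : ∀ p ∈ R, r p.1 p.2)
    (hΛ : ∀ l ∈ Λ, ∀ f : ℕ → Term σ X, r (l.1.subst f) (l.2.subst f)) :
    ∀ {a b}, presCong σ Λ X R a b → r a b := by
  intro a b h
  refine h r hr ?_
  rintro x y (hxy | ⟨l, hl, f, rfl, rfl⟩)
  · exact hR _ hxy
  · exact hΛ l hl f

theorem presCong_mono {Λ : Set (Term σ ℕ × Term σ ℕ)} {X : Type}
    {R R' : Set (Term σ X × Term σ X)} (hRR' : R ⊆ R') :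
    ∀ {a b}, presCong σ Λ X R a b → presCong σ Λ X R' a b :=
  presCong_le (presCong_isCong Λ X R') (fun p hp => presCong_of_mem (hRR' hp))
    (fun _ hl f => presCong_of_law hl f)

theorem presCong_mk_out {Λ : Set (Term σ ℕ × Term σ ℕ)} {X : Type}
    (R : Set (Term σ X × Term σ X)) (t : Term σ X) :
    presCong σ Λ X R ((Quot.mk (presCong σ Λ X (∅ : Set _)) t).out) t :=
  presCong_mono (Set.empty_subset R) (out_rel' (presCong_isCong Λ X ∅).1 t)

theorem mk_isHom (A : Alg σ) (θ : A.carrier → A.carrier → Prop) (hθ : IsCongruence A θ) :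
    IsHom A (quotAlg A θ) (Quot.mk θ) := by
  intro i x
  exact Quot.sound (hθ.2 i _ _ fun j => hθ.1.symm (out_rel' hθ.1 (x j)))

theorem subst_isHom {X Y : Type} (f : X → Term σ Y) :
    IsHom (termAlg σ X) (termAlg σ Y) (Term.subst f) :=
  fun _ _ => rfl

theorem isHom_comp {A B C : Alg σ} {f : A.carrier → B.carrier} {g : B.carrier → C.carrier}
    (hf : IsHom A B f) (hg : IsHom B C g) : IsHom A C (g ∘ f) := by
  intro i x
  simp only [Function.comp, hf i x, hg i]

theorem hom_ext {X : Type} {B : Alg σ} {h h' : Term σ X → B.carrier}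
    (hh : IsHom (termAlg σ X) B h) (hh' : IsHom (termAlg σ X) B h')
    (hv : ∀ v, h (.var v) = h' (.var v)) : ∀ t, h t = h' t := by
  intro t
  induction t with
  | var v => exact hv v
  | app i x ih =>
    erw [show Term.app i x = (termAlg σ X).op i x from rfl, hh, hh']
    exact congrArg _ (funext ih)

theorem subst_subst {X Y Z : Type} (f : X → Term σ Y) (g : Y → Term σ Z) :
    ∀ t : Term σ X, (t.subst f).subst g = t.subst (fun x => (f x).subst g) := by
  intro t
  induction t with
  | var v => rfl
  | app i x ih => simp only [Term.subst]; exact congrArg _ (funext ih)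

theorem iso_symm_hom {A B : Alg σ} (f : A.carrier ≃ B.carrier) (hf : IsHom A B f) :
    IsHom B A f.symm := by
  intro i x
  apply f.injective
  rw [Equiv.apply_symm_apply, hf]
  exact congrArg _ (funext fun j => (Equiv.apply_symm_apply f (x j)).symm)

end Stmt10Aux

/-- For a variety of finite type, the class of finitely generated (equivalently, for
each n, of n-generated) algebras satisfies ACC on congruence lattices if and only if
every algebra in the class has a finite presentation. -/
theorem stmt10 (σ : Signature) (hfin : Finite σ.I) (Λ : Set (Term σ ℕ × Term σ ℕ)) :
    (∀ (k : ℕ) (R : Set (Term σ (Fin k) × Term σ (Fin k))),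
        HasACCcong (presAlg σ Λ (Fin k) R)) ↔
    (∀ (k : ℕ) (R : Set (Term σ (Fin k) × Term σ (Fin k))),
        ∃ R' : Set (Term σ (Fin k) × Term σ (Fin k)),
          R'.Finite ∧ AlgIso (presAlg σ Λ (Fin k) R) (presAlg σ Λ (Fin k) R')) := by
  constructor
  · -- ACC → finitely presented
    intro hACC k R
    by_contra hno
    push_neg at hno
    -- every finite subset F of R generates a strictly smaller congruence
    have key : ∀ F : Set (Term σ (Fin k) × Term σ (Fin k)), F.Finite → F ⊆ R →
        ∃ p ∈ R, ¬ presCong σ Λ (Fin k) F p.1 p.2 := by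
      intro F hFfin hFR
      by_contra h
      push_neg at h
      have hEq : presCong σ Λ (Fin k) R = presCong σ Λ (Fin k) F := by
        funext s t
        apply propext
        constructor
        · exact fun hst => presCong_le (presCong_isCong Λ (Fin k) F) h
            (fun _ hl f => presCong_of_law hl f) hst
        · exact fun hst => presCong_mono hFR hst
      have hAlgEq : presAlg σ Λ (Fin k) R = presAlg σ Λ (Fin k) F := by
        unfold presAlg; rw [hEq]
      refine hno F hFfin ?_
      rw [hAlgEq]
      exact ⟨Equiv.refl _, fun i x => rfl⟩
    have step : ∀ q : {F : Set (Term σ (Fin k) × Term σ (Fin k)) // F.Finite ∧ F ⊆ R},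
        ∃ q' : {F : Set (Term σ (Fin k) × Term σ (Fin k)) // F.Finite ∧ F ⊆ R},
          q.1 ⊆ q'.1 ∧ ∃ s t : Term σ (Fin k), ¬ presCong σ Λ (Fin k) q.1 s t ∧
            presCong σ Λ (Fin k) q'.1 s t := by
      intro q
      obtain ⟨p, hpR, hp⟩ := key q.1 q.2.1 q.2.2
      refine ⟨⟨insert p q.1, q.2.1.insert p, Set.insert_subset hpR q.2.2⟩,
        Set.subset_insert p q.1, p.1, p.2, hp, ?_⟩
      exact presCong_of_mem (Set.mem_insert p _)
    choose g hgsub s t hs ht using step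
    let F : ℕ → {F : Set (Term σ (Fin k) × Term σ (Fin k)) // F.Finite ∧ F ⊆ R} :=
      fun n => g^[n] ⟨∅, Set.finite_empty, Set.empty_subset R⟩
    have hFsucc : ∀ n, F (n + 1) = g (F n) := fun n => Function.iterate_succ_apply' g n _
    -- the induced chain on the free algebra presAlg σ Λ (Fin k) ∅
    let lam0 := presCong σ Λ (Fin k) (∅ : Set (Term σ (Fin k) × Term σ (Fin k)))
    let c : ℕ → ((presAlg σ Λ (Fin k) ∅).carrier → (presAlg σ Λ (Fin k) ∅).carrier → Prop) :=
      fun n a b => presCong σ Λ (Fin k) (F n).1 (Quot.out a) (Quot.out b)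
    have hccong : ∀ n, IsCongruence (presAlg σ Λ (Fin k) ∅) (c n) := by
      intro n
      constructor
      · constructor
        · intro a; exact (presCong_isCong Λ (Fin k) (F n).1).1.refl _
        · intro a b h; exact (presCong_isCong Λ (Fin k) (F n).1).1.symm h
        · intro a b d h1 h2; exact (presCong_isCong Λ (Fin k) (F n).1).1.trans h1 h2
      · intro i x y h
        have e := (presCong_isCong Λ (Fin k) (F n).1)
        refine e.1.trans (presCong_mk_out (Λ := Λ) (F n).1 _) (e.1.trans (e.2 i _ _ h)
          (e.1.symm (presCong_mk_out (Λ := Λ) (F n).1 _)))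
    have hcmono : ∀ n a b, c n a b → c (n + 1) a b := by
      intro n a b h
      have hsub : (F n).1 ⊆ (F (n + 1)).1 := by rw [hFsucc n]; exact hgsub (F n)
      exact presCong_mono hsub h
    obtain ⟨N, hN⟩ := hACC k ∅ c hccong hcmono
    have hNN := hN (N + 1) (Nat.le_succ N)
    -- witnesses
    have hw1 : c (N + 1) (Quot.mk lam0 (s (F N))) (Quot.mk lam0 (t (F N))) := by
      have e := (presCong_isCong Λ (Fin k) (F (N + 1)).1)
      refine e.1.trans (presCong_mk_out (Λ := Λ) _ _) (e.1.trans ?_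
        (e.1.symm (presCong_mk_out (Λ := Λ) _ _)))
      rw [hFsucc N]
      exact ht (F N)
    rw [hNN] at hw1
    have e := (presCong_isCong Λ (Fin k) (F N).1)
    exact hs (F N) (e.1.trans (e.1.symm (presCong_mk_out (Λ := Λ) _ _))
      (e.1.trans hw1 (presCong_mk_out (Λ := Λ) _ _)))
  · -- finitely presented → ACC
    intro hfp k R
    intro c hc hmono
    classical
    -- pull the chain back to the term algebra
    let θ : ℕ → Term σ (Fin k) → Term σ (Fin k) → Prop :=
      fun n s t => c n (Quot.mk (presCong σ Λ (Fin k) R) s) (Quot.mk (presCong σ Λ (Fin k) R) t)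
    have hmkhom := mk_isHom (termAlg σ (Fin k)) (presCong σ Λ (Fin k) R)
      (presCong_isCong Λ (Fin k) R)
    have hθcong : ∀ n, IsCongruence (termAlg σ (Fin k)) (θ n) := by
      intro n
      constructor
      · exact ⟨fun a => (hc n).1.refl _, fun h => (hc n).1.symm h,
          fun h1 h2 => (hc n).1.trans h1 h2⟩
      · intro i x y h
        have e1 : Quot.mk (presCong σ Λ (Fin k) R) (Term.app i x) =
            (presAlg σ Λ (Fin k) R).op i (fun j => Quot.mk (presCong σ Λ (Fin k) R) (x j)) :=
          hmkhom i x
        have e2 : Quot.mk (presCong σ Λ (Fin k) R) (Term.app i y) =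
            (presAlg σ Λ (Fin k) R).op i (fun j => Quot.mk (presCong σ Λ (Fin k) R) (y j)) :=
          hmkhom i y
        show c n (Quot.mk (presCong σ Λ (Fin k) R) (Term.app i x))
          (Quot.mk (presCong σ Λ (Fin k) R) (Term.app i y))
        rw [e1, e2]
        exact (hc n).2 i _ _ h
    have hθmono : ∀ {m n : ℕ}, m ≤ n → ∀ s t, θ m s t → θ n s t := by
      intro m n hmn s t h
      induction hmn with
      | refl => exact h
      | step _ ih => exact hmono _ _ _ ih
    have hθR_le : ∀ n s t, presCong σ Λ (Fin k) R s t → θ n s t := by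
      intro n s t h
      show c n (Quot.mk (presCong σ Λ (Fin k) R) s) (Quot.mk (presCong σ Λ (Fin k) R) t)
      rw [Quot.sound h]
      exact (hc n).1.refl _
    -- the union of the pulled-back chain
    let Θset : Set (Term σ (Fin k) × Term σ (Fin k)) := {p | ∃ n, θ n p.1 p.2}
    have hUnion_cong : IsCongruence (termAlg σ (Fin k)) (fun s t => ∃ n, θ n s t) := by
      constructor
      · constructor
        · intro a; exact ⟨0, (hθcong 0).1.refl a⟩
        · rintro a b ⟨n, h⟩; exact ⟨n, (hθcong n).1.symm h⟩
        · rintro a b d ⟨n, h1⟩ ⟨m, h2⟩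
          exact ⟨max n m, (hθcong _).1.trans (hθmono (le_max_left n m) _ _ h1)
            (hθmono (le_max_right n m) _ _ h2)⟩
      · intro i x y h
        choose nf hnf using h
        refine ⟨Finset.univ.sup nf, (hθcong _).2 i x y fun j => ?_⟩
        exact hθmono (Finset.le_sup (Finset.mem_univ j)) _ _ (hnf j)
    have hU_iff : ∀ s t, presCong σ Λ (Fin k) Θset s t ↔ ∃ n, θ n s t := by
      intro s t
      constructor
      · exact fun h => presCong_le hUnion_cong (fun p hp => hp)
          (fun l hl f => ⟨0, hθR_le 0 _ _ (presCong_of_law hl f)⟩) h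
      · intro h; exact presCong_of_mem (p := (s, t)) h
    -- use the finite presentation of the quotient by the union
    obtain ⟨R', hR'fin, φ, hφ⟩ := hfp k Θset
    have hUcong := presCong_isCong Λ (Fin k) Θset
    have h'cong := presCong_isCong Λ (Fin k) R'
    have hφsym := iso_symm_hom φ hφ
    have hmkU := mk_isHom (termAlg σ (Fin k)) (presCong σ Λ (Fin k) Θset) hUcong
    have hmk' := mk_isHom (termAlg σ (Fin k)) (presCong σ Λ (Fin k) R') h'cong
    have hu : ∀ v : Fin k, ∃ uu : Term σ (Fin k),
        Quot.mk (presCong σ Λ (Fin k) R') uu =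
          φ (Quot.mk (presCong σ Λ (Fin k) Θset) (.var v)) :=
      fun v => ⟨Quot.out _, Quot.out_eq _⟩
    choose u hu using hu
    have hw : ∀ v : Fin k, ∃ ww : Term σ (Fin k),
        Quot.mk (presCong σ Λ (Fin k) Θset) ww =
          φ.symm (Quot.mk (presCong σ Λ (Fin k) R') (.var v)) :=
      fun v => ⟨Quot.out _, Quot.out_eq _⟩
    choose w hw using hw
    have idf : ∀ tt : Term σ (Fin k), Quot.mk (presCong σ Λ (Fin k) R') (tt.subst u) =
        φ (Quot.mk (presCong σ Λ (Fin k) Θset) tt) :=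
      fun tt => hom_ext (isHom_comp (subst_isHom u) hmk') (isHom_comp hmkU hφ)
        (fun v => hu v) tt
    have idg : ∀ tt : Term σ (Fin k), Quot.mk (presCong σ Λ (Fin k) Θset) (tt.subst w) =
        φ.symm (Quot.mk (presCong σ Λ (Fin k) R') tt) :=
      fun tt => hom_ext (isHom_comp (subst_isHom w) hmkU) (isHom_comp hmk' hφsym)
        (fun v => hw v) tt
    have htrans : ∀ s t, presCong σ Λ (Fin k) Θset s t →
        presCong σ Λ (Fin k) R' (s.subst u) (t.subst u) := by
      intro s t h
      apply (mk_eq_iff' h'cong.1).mp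
      erw [idf s, idf t]
      exact congrArg φ ((mk_eq_iff' hUcong.1).mpr h)
    -- the finite generating set
    let E : Set (Term σ (Fin k) × Term σ (Fin k)) :=
      (Set.range fun v : Fin k => (Term.var v, (u v).subst w)) ∪
        ((fun p : Term σ (Fin k) × Term σ (Fin k) => (p.1.subst w, p.2.subst w)) '' R')
    have hEfin : E.Finite := (Set.finite_range _).union (hR'fin.image _)
    have eE := presCong_isCong Λ (Fin k) E
    have hEsub : ∀ p ∈ E, presCong σ Λ (Fin k) Θset p.1 p.2 := by
      rintro p (⟨v, rfl⟩ | ⟨q, hq, rfl⟩)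
      · show presCong σ Λ (Fin k) Θset (Term.var v) ((u v).subst w)
        apply (mk_eq_iff' hUcong.1).mp
        erw [idg (u v), hu v, Equiv.symm_apply_apply]; rfl
      · show presCong σ Λ (Fin k) Θset (q.1.subst w) (q.2.subst w)
        apply (mk_eq_iff' hUcong.1).mp
        erw [idg q.1, idg q.2]
        exact congrArg φ.symm ((mk_eq_iff' h'cong.1).mpr (presCong_of_mem hq))
    -- a uniform level for the finitely many generators
    let nn : Term σ (Fin k) × Term σ (Fin k) → ℕ := fun p =>
      if h : ∃ n, θ n p.1 p.2 then h.choose else 0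
    let N := hEfin.toFinset.sup nn
    have hEN : ∀ p ∈ E, θ N p.1 p.2 := by
      intro p hp
      have h : ∃ n, θ n p.1 p.2 := (hU_iff p.1 p.2).mp (hEsub p hp)
      have h1 : θ (nn p) p.1 p.2 := by
        show θ (if h : ∃ n, θ n p.1 p.2 then h.choose else 0) p.1 p.2
        rw [dif_pos h]
        exact h.choose_spec
      exact hθmono (Finset.le_sup (hEfin.mem_toFinset.mpr hp)) _ _ h1
    -- E generates the union congruence
    have ha : ∀ tt : Term σ (Fin k), presCong σ Λ (Fin k) E tt ((tt.subst u).subst w) := by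
      intro tt
      induction tt with
      | var v => exact presCong_of_mem (p := (Term.var v, (u v).subst w)) (Or.inl ⟨v, rfl⟩)
      | app i x ih => exact eE.2 i _ _ ih
    have hb : ∀ p q, presCong σ Λ (Fin k) R' p q →
        presCong σ Λ (Fin k) E (p.subst w) (q.subst w) := by
      intro p q h
      refine presCong_le
        (r := fun p q => presCong σ Λ (Fin k) E (p.subst w) (q.subst w)) ?_ ?_ ?_ h
      · constructor
        · exact ⟨fun a => eE.1.refl _, fun h => eE.1.symm h, fun h1 h2 => eE.1.trans h1 h2⟩
        · intro i x y hxy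
          exact eE.2 i _ _ hxy
      · intro pq hpq
        exact presCong_of_mem (p := (pq.1.subst w, pq.2.subst w)) (Or.inr ⟨pq, hpq, rfl⟩)
      · intro l hl f
        rw [subst_subst f w l.1, subst_subst f w l.2]
        exact presCong_of_law hl _
    have hUN : ∀ s t, presCong σ Λ (Fin k) Θset s t → θ N s t := by
      intro s t h
      have h1 : presCong σ Λ (Fin k) E s t := by
        have h2 := hb _ _ (htrans s t h)
        exact eE.1.trans (ha s) (eE.1.trans h2 (eE.1.symm (ha t)))
      exact presCong_le (hθcong N) (fun p hp => hEN p hp)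
        (fun l hl f => hθR_le N _ _ (presCong_of_law hl f)) h1
    -- the chain stabilizes at N
    refine ⟨N, fun m hm => ?_⟩
    funext a b
    apply propext
    constructor
    · intro h
      have h1 : c m (Quot.mk (presCong σ Λ (Fin k) R) (Quot.out a))
          (Quot.mk (presCong σ Λ (Fin k) R) (Quot.out b)) := by
        erw [Quot.out_eq a, Quot.out_eq b]; exact h
      have h2 : θ N (Quot.out a) (Quot.out b) :=
        hUN _ _ ((hU_iff _ _).mpr ⟨m, h1⟩)
      have h3 : c N (Quot.mk (presCong σ Λ (Fin k) R) (Quot.out a))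
          (Quot.mk (presCong σ Λ (Fin k) R) (Quot.out b)) := h2
      erw [Quot.out_eq a, Quot.out_eq b] at h3; exact h3
    · intro h
      have h1 : c N (Quot.mk (presCong σ Λ (Fin k) R) (Quot.out a))
          (Quot.mk (presCong σ Λ (Fin k) R) (Quot.out b)) := by
        erw [Quot.out_eq a, Quot.out_eq b]; exact h
      have h2 : θ m (Quot.out a) (Quot.out b) := hθmono hm _ _ h1
      have h3 : c m (Quot.mk (presCong σ Λ (Fin k) R) (Quot.out a))
          (Quot.mk (presCong σ Λ (Fin k) R) (Quot.out b)) := h2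
      erw [Quot.out_eq a, Quot.out_eq b] at h3; exact h3
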